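/- Conditional controllability together with conditional decomposability of the prefix closure implies controllability: let G = G₁ ∥ G₂ ∥ G_k be the global plant over E = E₁∪E₂∪E_k, and K ⊆ L_m(G) a language such that \overline{K} = \overline{P_{1+k}(K)} ∥ \overline{P_{2+k}(K)} (conditional decomposability of \overline{K}), P_k(K) is controllable w.r.t. L(G_k) and E_{k,u}, and P_{i+k}(K) is controllable w.r.t. L(G_i) ∥ \overline{P_k(K)} and E_{i+k,u} for i = 1,2. Then K is controllable with respect to L(G) and E_u. -/
import Mathlib


open scoped Classical

/-- Natural projection: erase letters not in `A`. -/
noncomputable def proj {Ev : Type*} (A : Set Ev) (w : List Ev) : List Ev :=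
  w.filter (fun a => decide (a ∈ A))

/-- Projection of a language. -/
noncomputable def projL {Ev : Type*} (A : Set Ev) (L : Set (List Ev)) : Set (List Ev) :=
  proj A '' L

/-- Words over an alphabet `A`, i.e., `A*`. -/
def star {Ev : Type*} (A : Set Ev) : Set (List Ev) := {w | ∀ a ∈ w, a ∈ A}

/-- Synchronous product of `L₁ ⊆ A*` and `L₂ ⊆ B*`. -/
noncomputable def sync {Ev : Type*} (A B : Set Ev) (L1 L2 : Set (List Ev)) :
    Set (List Ev) :=
  {w | w ∈ star (A ∪ B) ∧ proj A w ∈ L1 ∧ proj B w ∈ L2}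

/-- Prefix closure of a language. -/
def prefixCl {Ev : Type*} (L : Set (List Ev)) : Set (List Ev) := {w | ∃ v, w ++ v ∈ L}

/-- Controllability of `K` with respect to (prefix-closed) `L` and uncontrollable events `Eu`. -/
def controllable {Ev : Type*} (K L : Set (List Ev)) (Eu : Set Ev) : Prop :=
  ∀ s ∈ prefixCl K, ∀ u ∈ Eu, s ++ [u] ∈ L → s ++ [u] ∈ prefixCl K

/-- Supremal controllable sublanguage of `K` w.r.t. `N` and `U`. -/
noncomputable def supC {Ev : Type*} (K N : Set (List Ev)) (U : Set Ev) : Set (List Ev) :=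
  ⋃₀ {M | M ⊆ K ∧ controllable M N U}

/-- `proj A` is an `L`-observer. -/
def observer {Ev : Type*} (A : Set Ev) (L : Set (List Ev)) : Prop :=
  ∀ t ∈ projL A L, ∀ s ∈ prefixCl L, proj A s <+: t →
    ∃ u, s ++ u ∈ L ∧ proj A (s ++ u) = t

/-- `proj A` is locally control consistent (LCC) for `L` (w.r.t. uncontrollable events `Eu`). -/
def lcc {Ev : Type*} (A Eu : Set Ev) (L : Set (List Ev)) : Prop :=
  ∀ s ∈ L, ∀ σ ∈ A ∩ Eu, proj A s ++ [σ] ∈ projL A L →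
    (∃ u, (∀ a ∈ u, a ∉ A) ∧ s ++ u ++ [σ] ∈ L) →
    ∃ u, (∀ a ∈ u, a ∈ Eu ∧ a ∉ A) ∧ s ++ u ++ [σ] ∈ L

lemma proj_append {Ev : Type*} (A : Set Ev) (w v : List Ev) :
    proj A (w ++ v) = proj A w ++ proj A v := by
  simp [proj, List.filter_append]

lemma proj_proj {Ev : Type*} {A B : Set Ev} (h : A ⊆ B) (w : List Ev) :
    proj A (proj B w) = proj A w := by
  unfold proj
  rw [List.filter_filter]
  congr 1
  funext a
  by_cases ha : a ∈ A <;> simp [ha, fun hh => h hh]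

lemma proj_mem_star {Ev : Type*} (A : Set Ev) (w : List Ev) : proj A w ∈ star A := by
  intro a ha
  simp [proj, List.mem_filter] at ha
  exact ha.2

lemma proj_prefixCl {Ev : Type*} (A : Set Ev) {K : Set (List Ev)} {s : List Ev}
    (hs : s ∈ prefixCl K) : proj A s ∈ prefixCl (projL A K) := by
  obtain ⟨v, hv⟩ := hs
  exact ⟨proj A v, ⟨s ++ v, hv, proj_append A s v⟩⟩

lemma proj_snoc_mem {Ev : Type*} {A : Set Ev} {u : Ev} (hu : u ∈ A) (s : List Ev) :
    proj A (s ++ [u]) = proj A s ++ [u] := by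
  simp [proj_append, proj, hu]

lemma proj_snoc_not_mem {Ev : Type*} {A : Set Ev} {u : Ev} (hu : u ∉ A) (s : List Ev) :
    proj A (s ++ [u]) = proj A s := by
  simp [proj_append, proj, hu]

lemma key_lemma {Ev : Type*} (Ei Ek Eu : Set Ev) (LGi LGk K : Set (List Ev))
    (hck : controllable (projL Ek K) LGk (Ek ∩ Eu))
    (hc : controllable (projL (Ei ∪ Ek) K)
      (sync Ei Ek LGi (prefixCl (projL Ek K))) ((Ei ∪ Ek) ∩ Eu))
    (s : List Ev) (u : Ev) (hs : s ∈ prefixCl K) (hu : u ∈ Eu)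
    (hi : proj Ei (s ++ [u]) ∈ LGi) (hk : proj Ek (s ++ [u]) ∈ LGk) :
    proj (Ei ∪ Ek) (s ++ [u]) ∈ prefixCl (projL (Ei ∪ Ek) K) := by
  have hEk : proj Ek (s ++ [u]) ∈ prefixCl (projL Ek K) := by
    by_cases huk : u ∈ Ek
    · rw [proj_snoc_mem huk] at hk ⊢
      exact hck (proj Ek s) (proj_prefixCl Ek hs) u ⟨huk, hu⟩ hk
    · rw [proj_snoc_not_mem huk]
      exact proj_prefixCl Ek hs
  by_cases hui : u ∈ Ei ∪ Ek
  · rw [proj_snoc_mem hui]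
    apply hc (proj (Ei ∪ Ek) s) (proj_prefixCl (Ei ∪ Ek) hs) u ⟨hui, hu⟩
    refine ⟨?_, ?_, ?_⟩
    · rw [← proj_snoc_mem hui]; exact proj_mem_star _ _
    · rw [← proj_snoc_mem hui, proj_proj Set.subset_union_left]; exact hi
    · rw [← proj_snoc_mem hui, proj_proj Set.subset_union_right]; exact hEk
  · rw [proj_snoc_not_mem hui]
    exact proj_prefixCl (Ei ∪ Ek) hs

/-- conditional controllability together with conditional decomposability
of the prefix closure implies controllability w.r.t. the global plant. -/
theorem stmt6 {Ev : Type*} (E1 E2 Ek Eu : Set Ev) (LG1 LG2 LGk K : Set (List Ev))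
    (hLG1 : LG1 ⊆ star E1) (hLG2 : LG2 ⊆ star E2) (hLGk : LGk ⊆ star Ek)
    (hLG1c : prefixCl LG1 = LG1) (hLG2c : prefixCl LG2 = LG2) (hLGkc : prefixCl LGk = LGk)
    (hK : K ⊆ sync E1 (E2 ∪ Ek) LG1 (sync E2 Ek LG2 LGk))
    (hcd : prefixCl K =
      sync (E1 ∪ Ek) (E2 ∪ Ek) (prefixCl (projL (E1 ∪ Ek) K)) (prefixCl (projL (E2 ∪ Ek) K)))
    (hsub : prefixCl (projL Ek K) ⊆ LGk)
    (hck : controllable (projL Ek K) LGk (Ek ∩ Eu))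
    (hc1 : controllable (projL (E1 ∪ Ek) K)
      (sync E1 Ek LG1 (prefixCl (projL Ek K))) ((E1 ∪ Ek) ∩ Eu))
    (hc2 : controllable (projL (E2 ∪ Ek) K)
      (sync E2 Ek LG2 (prefixCl (projL Ek K))) ((E2 ∪ Ek) ∩ Eu)) :
    controllable K (sync E1 (E2 ∪ Ek) LG1 (sync E2 Ek LG2 LGk)) Eu := by
  intro s hs u hu hsu
  obtain ⟨hstar, h1, hstar2, h2, hk⟩ := hsu
  rw [proj_proj Set.subset_union_left] at h2
  rw [proj_proj Set.subset_union_right] at hk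
  rw [hcd]
  refine ⟨?_, ?_, ?_⟩
  · intro a ha
    have := hstar a ha
    revert this
    simp only [Set.mem_union]
    tauto
  · exact key_lemma E1 Ek Eu LG1 LGk K hck hc1 s u hs hu h1 hk
  · exact key_lemma E2 Ek Eu LG2 LGk K hck hc2 s u hs hu h2 hk
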